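/- arXiv:2604.00266 — 5 statements merged into one kernel-verified Lean document; each statement's English description precedes it below -/
import Mathlib

section
/- The sequence of A-modules 0 → J ⊕ J' → A ⋈^{f,g}(J,J') → A/I₀ → 0 (where the first map is the natural embedding (j,j') ↦ (j,j') and the second is the natural projection (f(a)+j, g(a)+j') ↦ a + I₀) is split exact if and only if there exist x ∈ J and y ∈ J' such that f(i) = x·f(i) and g(i) = y·g(i) for all i ∈ I₀. -/
open IsLocalRing

variable {A B C : Type} [CommRing A] [CommRing B] [CommRing C]

def BiAmalg (f : A →+* B) (g : A →+* C) (J : Ideal B) (J' : Ideal C) :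
    Subring (B × C) where
  carrier := {x | ∃ a : A, ∃ j ∈ J, ∃ j' ∈ J', x = (f a + j, g a + j')}
  zero_mem' := ⟨0, 0, J.zero_mem, 0, J'.zero_mem, by ext <;> simp⟩
  one_mem' := ⟨1, 0, J.zero_mem, 0, J'.zero_mem, by ext <;> simp⟩
  add_mem' := by
    rintro x y ⟨a, j, hj, j', hj', rfl⟩ ⟨b, k, hk, k', hk', rfl⟩
    exact ⟨a + b, j + k, J.add_mem hj hk, j' + k', J'.add_mem hj' hk', by
      simp only [Prod.mk_add_mk, map_add, Prod.mk.injEq]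
      constructor <;> ring⟩
  neg_mem' := by
    rintro x ⟨a, j, hj, j', hj', rfl⟩
    exact ⟨-a, -j, J.neg_mem hj, -j', J'.neg_mem hj', by
      simp only [Prod.neg_mk, map_neg, Prod.mk.injEq]
      constructor <;> ring⟩
  mul_mem' := by
    rintro x y ⟨a, j, hj, j', hj', rfl⟩ ⟨b, k, hk, k', hk', rfl⟩
    exact ⟨a * b, f a * k + j * f b + j * k,
      J.add_mem (J.add_mem (J.mul_mem_left _ hk) (J.mul_mem_right _ hj)) (J.mul_mem_right _ hj),
      g a * k' + j' * g b + j' * k',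
      J'.add_mem (J'.add_mem (J'.mul_mem_left _ hk') (J'.mul_mem_right _ hj'))
        (J'.mul_mem_right _ hj'), by
      simp only [Prod.mk_mul_mk, map_mul, Prod.mk.injEq]
      constructor <;> ring⟩

theorem BiAmalg.mem_mk (f : A →+* B) (g : A →+* C) (J : Ideal B) (J' : Ideal C)
    (a : A) {j : B} (hj : j ∈ J) {j' : C} (hj' : j' ∈ J') :
    (f a + j, g a + j') ∈ BiAmalg f g J J' :=
  ⟨a, j, hj, j', hj', rfl⟩

def BiAmalg.incl (f : A →+* B) (g : A →+* C) (J : Ideal B) (J' : Ideal C) :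
    A →+* BiAmalg f g J J' where
  toFun a := ⟨(f a, g a), a, 0, J.zero_mem, 0, J'.zero_mem, by simp⟩
  map_one' := Subtype.ext (by simp)
  map_mul' x y := Subtype.ext (by simp [Prod.mk_mul_mk])
  map_zero' := Subtype.ext (by simp)
  map_add' x y := Subtype.ext (by simp [Prod.mk_add_mk])

instance BiAmalg.moduleA (f : A →+* B) (g : A →+* C) (J : Ideal B) (J' : Ideal C) :
    Module A (BiAmalg f g J J') :=
  Module.compHom _ (BiAmalg.incl f g J J')

/-- The natural embedding `J ⊕ J' → A ⋈^{f,g} (J, J')`, `(j, j') ↦ (j, j')`. -/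
def BiAmalg.emb (f : A →+* B) (g : A →+* C) (J : Ideal B) (J' : Ideal C) :
    J × J' → BiAmalg f g J J' :=
  fun p => ⟨((p.1 : B), (p.2 : C)), 0, p.1, p.1.2, p.2, p.2.2, by simp⟩


lemma BiAmalg.smul_val (f : A →+* B) (g : A →+* C) (J : Ideal B) (J' : Ideal C)
    (a : A) (z : BiAmalg f g J J') :
    ((a • z : BiAmalg f g J J') : B × C) = (f a * (z : B × C).1, g a * (z : B × C).2) := rfl

lemma BiAmalg.pi_val (f : A →+* B) (g : A →+* C) (J : Ideal B) (J' : Ideal C)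
    (π : BiAmalg f g J J' →ₗ[A] A ⧸ J.comap f)
    (hπ : ∀ (a : A) (j : B) (hj : j ∈ J) (j' : C) (hj' : j' ∈ J'),
      π ⟨(f a + j, g a + j'), BiAmalg.mem_mk f g J J' a hj hj'⟩ =
        Ideal.Quotient.mk (J.comap f) a)
    (z : BiAmalg f g J J') (a : A) {j : B} (hj : j ∈ J) {j' : C} (hj' : j' ∈ J')
    (hz : (z : B × C) = (f a + j, g a + j')) :
    π z = Ideal.Quotient.mk (J.comap f) a := by
  have : z = ⟨(f a + j, g a + j'), BiAmalg.mem_mk f g J J' a hj hj'⟩ := Subtype.ext hz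
  rw [this]; exact hπ a j hj j' hj'

theorem biAmalg_splitExact_iff (f : A →+* B) (g : A →+* C) (J : Ideal B) (J' : Ideal C)
    (hI : J.comap f = J'.comap g)
    (π : BiAmalg f g J J' →ₗ[A] A ⧸ J.comap f)
    (hπ : ∀ (a : A) (j : B) (hj : j ∈ J) (j' : C) (hj' : j' ∈ J'),
      π ⟨(f a + j, g a + j'), BiAmalg.mem_mk f g J J' a hj hj'⟩ =
        Ideal.Quotient.mk (J.comap f) a) :
    (Function.Injective (BiAmalg.emb f g J J') ∧
      Function.Exact (BiAmalg.emb f g J J') π ∧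
      Function.Surjective π ∧
      ∃ σ : A ⧸ J.comap f →ₗ[A] BiAmalg f g J J', π ∘ₗ σ = LinearMap.id) ↔
    ∃ x ∈ J, ∃ y ∈ J', ∀ i ∈ J.comap f, f i = x * f i ∧ g i = y * g i := by
  constructor
  · rintro ⟨-, -, -, σ, hσ⟩
    set z := σ (Ideal.Quotient.mk (J.comap f) 1) with hzdef
    have hπz : π z = Ideal.Quotient.mk (J.comap f) 1 := by
      have := congrArg (fun t => t (Ideal.Quotient.mk (J.comap f) 1)) hσ
      simpa [hzdef] using this
    obtain ⟨a, j, hj, j', hj', hval⟩ := z.2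
    have hπz' : π z = Ideal.Quotient.mk (J.comap f) a :=
      BiAmalg.pi_val f g J J' π hπ z a hj hj' hval
    have ha1 : a - 1 ∈ J.comap f := by
      rw [hπz'] at hπz
      exact Ideal.Quotient.eq.mp hπz
    refine ⟨-(f (a - 1) + j), J.neg_mem (J.add_mem ha1 hj),
      -(g (a - 1) + j'), J'.neg_mem (J'.add_mem (by rw [hI] at ha1; exact ha1) hj'), ?_⟩
    intro i hi
    have hiz : i • z = 0 := by
      have h1 : (Ideal.Quotient.mk (J.comap f) i) = 0 := Ideal.Quotient.eq_zero_iff_mem.mpr hi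
      have h2 : i • (Ideal.Quotient.mk (J.comap f) (1 : A)) =
          Ideal.Quotient.mk (J.comap f) i := by
        have : i • (Ideal.Quotient.mk (J.comap f) (1 : A)) =
            Ideal.Quotient.mk (J.comap f) (i • (1 : A)) := rfl
        rw [this, smul_eq_mul, mul_one]
      rw [hzdef, ← map_smul, h2, h1, map_zero]
    have hval0 : ((i • z : BiAmalg f g J J') : B × C) = 0 := by
      rw [hiz]; rfl
    rw [BiAmalg.smul_val, hval] at hval0
    have h1 : f i * (f a + j) = 0 := congrArg Prod.fst hval0
    have h2 : g i * (g a + j') = 0 := congrArg Prod.snd hval0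
    constructor
    · have : f (a - 1) = f a - 1 := by rw [map_sub, map_one]
      rw [this]
      linear_combination h1
    · have : g (a - 1) = g a - 1 := by rw [map_sub, map_one]
      rw [this]
      linear_combination h2
  · rintro ⟨x, hx, y, hy, hxy⟩
    refine ⟨?_, ?_, ?_, ?_⟩
    · intro p q hpq
      have h : ((p.1 : B), (p.2 : C)) = ((q.1 : B), (q.2 : C)) := congrArg Subtype.val hpq
      exact Prod.ext (Subtype.ext (congrArg Prod.fst h)) (Subtype.ext (congrArg Prod.snd h))
    · intro z
      constructor
      · intro hz
        obtain ⟨a, j, hj, j', hj', hval⟩ := z.2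
        have hπz : π z = Ideal.Quotient.mk (J.comap f) a :=
          BiAmalg.pi_val f g J J' π hπ z a hj hj' hval
        have ha : a ∈ J.comap f := by
          rw [hπz] at hz
          exact Ideal.Quotient.eq_zero_iff_mem.mp hz
        refine ⟨(⟨f a + j, J.add_mem ha hj⟩, ⟨g a + j', J'.add_mem (by rw [hI] at ha; exact ha) hj'⟩), ?_⟩
        exact Subtype.ext hval.symm
      · rintro ⟨⟨⟨jb, hjb⟩, ⟨jc, hjc⟩⟩, rfl⟩
        refine (BiAmalg.pi_val f g J J' π hπ _ 0 hjb hjc (by simp [BiAmalg.emb])).trans (by simp)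
    · intro q
      obtain ⟨a, rfl⟩ := Ideal.Quotient.mk_surjective q
      exact ⟨⟨(f a, g a), a, 0, J.zero_mem, 0, J'.zero_mem, by simp⟩,
        BiAmalg.pi_val f g J J' π hπ _ a J.zero_mem J'.zero_mem (by simp)⟩
    · set s : BiAmalg f g J J' :=
        ⟨(1 - x, 1 - y), ⟨1, -x, J.neg_mem hx, -y, J'.neg_mem hy, by
          simp [sub_eq_add_neg]⟩⟩ with hs
      have hker : (J.comap f : Submodule A A) ≤ LinearMap.ker (LinearMap.toSpanSingleton A _ s) := by
        intro i hi
        simp only [LinearMap.mem_ker, LinearMap.toSpanSingleton_apply]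
        apply Subtype.ext
        rw [BiAmalg.smul_val]
        have h1 : f i = x * f i := (hxy i hi).1
        have h2 : g i = y * g i := (hxy i hi).2
        show (f i * (1 - x), g i * (1 - y)) = (0, 0)
        rw [Prod.mk.injEq]
        exact ⟨by linear_combination h1, by linear_combination h2⟩
      refine ⟨Submodule.liftQ _ (LinearMap.toSpanSingleton A _ s) hker, ?_⟩
      refine Submodule.linearMap_qext _ (LinearMap.ext fun a => ?_)
      simp only [LinearMap.comp_apply, Submodule.mkQ_apply, Submodule.liftQ_apply,
        LinearMap.toSpanSingleton_apply, LinearMap.id_apply]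
      have hval : ((a • s : BiAmalg f g J J') : B × C) =
          (f a + f a * (-x), g a + g a * (-y)) := by
        rw [BiAmalg.smul_val]
        show (f a * (1 - x), g a * (1 - y)) = _
        rw [Prod.mk.injEq]; constructor <;> ring
      rw [BiAmalg.pi_val f g J J' π hπ _ a (J.mul_mem_left _ (J.neg_mem hx))
        (J'.mul_mem_left _ (J'.neg_mem hy)) hval]
      rfl
end

section
/- Assume J ⊆ Jac(B) and J' ⊆ Jac(C). Then the exact sequence of A-modules 0 → J ⊕ J' → A ⋈^{f,g}(J,J') → A/I₀ → 0 splits if and only if I₀ = ker f ∩ ker g. -/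
open IsLocalRing

variable {A B C : Type} [CommRing A] [CommRing B] [CommRing C]

/-- If `J ⊆ Jac(B)` and `J' ⊆ Jac(C)`, then the exact sequence of `A`-modules
`0 → J ⊕ J' → A ⋈^{f,g} (J, J') → A/I₀ → 0` splits if and only if `I₀ = ker f ∩ ker g`. -/
theorem biAmalg_splits_iff (f : A →+* B) (g : A →+* C) (J : Ideal B) (J' : Ideal C)
    (hI : J.comap f = J'.comap g)
    (hJ : J ≤ (⊥ : Ideal B).jacobson) (hJ' : J' ≤ (⊥ : Ideal C).jacobson)
    (π : BiAmalg f g J J' →ₗ[A] A ⧸ J.comap f)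
    (hπ : ∀ (a : A) (j : B) (hj : j ∈ J) (j' : C) (hj' : j' ∈ J'),
      π ⟨(f a + j, g a + j'), BiAmalg.mem_mk f g J J' a hj hj'⟩ =
        Ideal.Quotient.mk (J.comap f) a) :
    (∃ σ : A ⧸ J.comap f →ₗ[A] BiAmalg f g J J', π ∘ₗ σ = LinearMap.id) ↔
      J.comap f = RingHom.ker f ⊓ RingHom.ker g := by
  constructor
  · rintro ⟨σ, hσ⟩
    obtain ⟨a, j, hj, j', hj', hx⟩ := (σ 1).2
    have hπσ : π (σ 1) = 1 := by
      have := congrArg (fun m => m (1 : A ⧸ J.comap f)) hσ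
      simpa using this
    have hσ1 : σ 1 = ⟨(f a + j, g a + j'), BiAmalg.mem_mk f g J J' a hj hj'⟩ :=
      Subtype.ext hx
    have ha : (Ideal.Quotient.mk (J.comap f)) a = 1 := by
      rw [← hπσ, hσ1]
      exact (hπ a j hj j' hj').symm
    have ha' : a - 1 ∈ J.comap f := by
      have : (Ideal.Quotient.mk (J.comap f)) (a - 1) = 0 := by
        rw [map_sub, ha, map_one, sub_self]
      exact (Ideal.Quotient.eq_zero_iff_mem).1 this
    -- units
    have hufa : IsUnit (f a + j) := by
      have hfa : f a - 1 ∈ J := by simpa using Ideal.mem_comap.1 ha'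
      have hmem : f a - 1 + j ∈ (⊥ : Ideal B).jacobson := hJ (J.add_mem hfa hj)
      have := (Ideal.mem_jacobson_bot.1 hmem) 1
      simpa [mul_one, sub_add, add_comm, add_left_comm, add_assoc, sub_add_cancel] using this
    have huga : IsUnit (g a + j') := by
      have ha'' : a - 1 ∈ J'.comap g := hI ▸ ha'
      have hga : g a - 1 ∈ J' := by simpa using Ideal.mem_comap.1 ha''
      have hmem : g a - 1 + j' ∈ (⊥ : Ideal C).jacobson := hJ' (J'.add_mem hga hj')
      have := (Ideal.mem_jacobson_bot.1 hmem) 1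
      simpa [mul_one, sub_add, add_comm, add_left_comm, add_assoc, sub_add_cancel] using this
    apply le_antisymm
    · intro i hi
      have hzero : i • σ 1 = 0 := by
        have h1 : (i : A) • (1 : A ⧸ J.comap f) = 0 := by
          have e : (1 : A ⧸ J.comap f) = Submodule.Quotient.mk (1 : A) := rfl
          rw [e, ← Submodule.Quotient.mk_smul, smul_eq_mul, mul_one]
          exact (Submodule.Quotient.mk_eq_zero _).2 hi
        rw [← map_smul σ, h1, map_zero]
      have hzero2 : BiAmalg.incl f g J J' i * σ 1 = 0 := hzero
      have hzero' : (BiAmalg.incl f g J J' i : B × C) * (σ 1 : B × C) = 0 := by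
        have := congrArg Subtype.val hzero2
        simpa using this
      have hfst : f i * (f a + j) = 0 := by
        have := congrArg Prod.fst hzero'
        rw [hσ1] at this
        have e : (BiAmalg.incl f g J J' i : B × C).1 = f i := rfl
        simpa [e] using this
      have hsnd : g i * (g a + j') = 0 := by
        have := congrArg Prod.snd hzero'
        rw [hσ1] at this
        have e : (BiAmalg.incl f g J J' i : B × C).2 = g i := rfl
        simpa [e] using this
      obtain ⟨u, hu⟩ := hufa
      obtain ⟨v, hv⟩ := huga
      constructor
      · have : f i * ↑u * ↑u⁻¹ = 0 * ↑u⁻¹ := by rw [hu, hfst, zero_mul]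
        simpa [mul_assoc] using this
      · have : g i * ↑v * ↑v⁻¹ = 0 * ↑v⁻¹ := by rw [hv, hsnd, zero_mul]
        simpa [mul_assoc] using this
    · intro i hi
      have : f i = 0 := hi.1
      show f i ∈ J
      rw [this]; exact J.zero_mem
  · intro h
    let l : A →ₗ[A] BiAmalg f g J J' :=
      { toFun := fun a => BiAmalg.incl f g J J' a
        map_add' := fun x y => map_add _ x y
        map_smul' := fun r x => map_mul (BiAmalg.incl f g J J') r x }
    have hker : J.comap f ≤ LinearMap.ker l := by
      intro i hi
      have h1 : f i = 0 := (h ▸ hi).1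
      have h2 : g i = 0 := (h ▸ hi).2
      simp only [LinearMap.mem_ker, LinearMap.coe_mk, AddHom.coe_mk, l]
      exact Subtype.ext (by simp [BiAmalg.incl, h1, h2, Prod.ext_iff])
    refine ⟨Submodule.liftQ (J.comap f) l hker, ?_⟩
    apply LinearMap.ext
    intro q
    obtain ⟨a, rfl⟩ := Submodule.Quotient.mk_surjective _ q
    have hmk : BiAmalg.incl f g J J' a =
        ⟨(f a + 0, g a + 0), BiAmalg.mem_mk f g J J' a J.zero_mem J'.zero_mem⟩ :=
      Subtype.ext (by simp [BiAmalg.incl])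
    show π (BiAmalg.incl f g J J' a) = _
    rw [hmk, hπ a 0 J.zero_mem 0 J'.zero_mem]
    rfl
end

section
/- Let (A, m) be a Noetherian local ring with J ⊆ Jac(B) and J' ⊆ Jac(C), and assume J and J' are finitely generated as A-modules. Then the Krull dimension of A ⋈^{f,g}(J,J') equals the Krull dimension of A/(ker f ∩ ker g). -/
open IsLocalRing

variable {A B C : Type} [CommRing A] [CommRing B] [CommRing C]

section KrullAux


variable {R S : Type*} [CommRing R] [CommRing S] [Algebra R S]

theorem liftLTSeries [Algebra.IsIntegral R S] (h : Function.Injective (algebraMap R S)) :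
    ∀ (n : ℕ) (p : LTSeries (PrimeSpectrum R)), p.length = n →
      ∃ q : LTSeries (PrimeSpectrum S), q.length = n ∧
        q.last.asIdeal.comap (algebraMap R S) = p.last.asIdeal := by
  intro n
  induction n with
  | zero =>
    intro p hp
    haveI := p.last.isPrime
    obtain ⟨Q, -, hQp, hQ⟩ := Ideal.exists_ideal_over_prime_of_isIntegral p.last.asIdeal (⊥ : Ideal S)
      (by rw [← RingHom.ker_eq_comap_bot, (RingHom.injective_iff_ker_eq_bot _).mp h]; exact bot_le)
    exact ⟨RelSeries.singleton _ (⟨Q, hQp⟩ : PrimeSpectrum S), rfl, hQ⟩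
  | succ n ih =>
    intro p hp
    obtain ⟨q, hq, hql⟩ := ih p.eraseLast (by simp [hp])
    have hrel : p.eraseLast.last < p.last := p.eraseLast_last_rel_last (by omega)
    haveI := p.last.isPrime
    haveI := q.last.isPrime
    obtain ⟨Q, hge, hQp, hQ⟩ := Ideal.exists_ideal_over_prime_of_isIntegral p.last.asIdeal
      q.last.asIdeal (by rw [hql]; exact le_of_lt hrel)
    have hne : q.last.asIdeal ≠ Q := by
      intro hEq
      apply ne_of_lt hrel
      apply PrimeSpectrum.ext
      rw [← hql, hEq, hQ]
    have hlt : q.last < (⟨Q, hQp⟩ : PrimeSpectrum S) :=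
      lt_of_le_of_ne hge (fun hEq => hne (congrArg PrimeSpectrum.asIdeal hEq))
    exact ⟨q.snoc ⟨Q, hQp⟩ hlt, by simp [hq], by rw [RelSeries.last_snoc]; exact hQ⟩

theorem ringKrullDim_eq_of_isIntegral_of_injective [Algebra.IsIntegral R S]
    (h : Function.Injective (algebraMap R S)) : ringKrullDim S = ringKrullDim R := by
  apply le_antisymm
  · apply Order.krullDim_le_of_strictMono
      (fun P : PrimeSpectrum S => PrimeSpectrum.comap (algebraMap R S) P)
    intro P Q hPQ
    have hle : P.asIdeal ≤ Q.asIdeal := le_of_lt hPQ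
    obtain ⟨x, hxQ, hxP⟩ := SetLike.exists_of_lt (show P.asIdeal < Q.asIdeal from hPQ)
    exact Ideal.comap_lt_comap_of_integral_mem_sdiff hle ⟨hxQ, hxP⟩
      (Algebra.IsIntegral.isIntegral x)
  · apply iSup_le
    intro p
    obtain ⟨q, hq, -⟩ := liftLTSeries h p.length p rfl
    rw [← hq]
    exact Order.LTSeries.length_le_krullDim q

end KrullAux

theorem biAmalg_ringKrullDim (f : A →+* B) (g : A →+* C) (J : Ideal B) (J' : Ideal C)
    [IsNoetherianRing A] [IsLocalRing A]
    (hI : J.comap f = J'.comap g)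
    (hJ : J ≤ (⊥ : Ideal B).jacobson) (hJ' : J' ≤ (⊥ : Ideal C).jacobson) :
    letI : Module A J := Module.compHom _ f
    letI : Module A J' := Module.compHom _ g
    Module.Finite A J → Module.Finite A J' →
    ringKrullDim (BiAmalg f g J J') = ringKrullDim (A ⧸ (RingHom.ker f ⊓ RingHom.ker g)) := by
  intro hfJ hfJ'
  classical
  letI : Module A J := Module.compHom _ f
  letI : Module A J' := Module.compHom _ g
  haveI : Module.Finite A J := hfJ
  haveI : Module.Finite A J' := hfJ'
  -- the algebra structure on the bi-amalgamation, compatible with `BiAmalg.moduleA`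
  letI alg : Algebra A (BiAmalg f g J J') :=
    { toSMul := inferInstance
      algebraMap := BiAmalg.incl f g J J'
      commutes' := fun a x => mul_comm _ _
      smul_def' := fun a x => rfl }
  -- the bi-amalgamation is a finite module over `A`
  let emb : J × J' → BiAmalg f g J J' := fun x =>
    ⟨((x.1 : B), (x.2 : C)), by simpa using BiAmalg.mem_mk f g J J' 0 x.1.2 x.2.2⟩
  let ψ : (A × (J × J')) →ₗ[A] BiAmalg f g J J' :=
    { toFun := fun x => BiAmalg.incl f g J J' x.1 + emb x.2
      map_add' := by
        rintro ⟨a, j, j'⟩ ⟨b, k, k'⟩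
        apply Subtype.ext
        show ((f (a + b) + ((j + k : J) : B), g (a + b) + ((j' + k' : J') : C)) : B × C) =
          (f a + (j : B), g a + (j' : C)) + (f b + (k : B), g b + (k' : C))
        simp only [map_add, Submodule.coe_add, Prod.mk_add_mk, Prod.mk.injEq]
        constructor <;> ring
      map_smul' := by
        rintro a ⟨b, j, j'⟩
        apply Subtype.ext
        show ((f (a * b) + ((f a • j : J) : B), g (a * b) + ((g a • j' : J') : C)) : B × C) =
          ((f a, g a) : B × C) * (f b + (j : B), g b + (j' : C))
        simp only [SetLike.val_smul, smul_eq_mul, map_mul, Prod.mk_mul_mk, Prod.mk.injEq]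
        constructor <;> ring }
  have hψ : Function.Surjective ψ := by
    rintro ⟨x, a, j, hj, j', hj', rfl⟩
    refine ⟨(a, ⟨j, hj⟩, ⟨j', hj'⟩), ?_⟩
    apply Subtype.ext
    rfl
  haveI : Module.Finite A (BiAmalg f g J J') := Module.Finite.of_surjective ψ hψ
  haveI : Algebra.IsIntegral A (BiAmalg f g J J') := Algebra.IsIntegral.of_finite A _
  -- the injection of `A ⧸ (ker f ⊓ ker g)` into the bi-amalgamation
  have hker : ∀ a ∈ RingHom.ker f ⊓ RingHom.ker g, BiAmalg.incl f g J J' a = 0 := by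
    rintro a ⟨h1, h2⟩
    apply Subtype.ext
    show ((f a, g a) : B × C) = 0
    simp only [SetLike.mem_coe, RingHom.mem_ker] at h1 h2
    simp [h1, h2]
  let φ : A ⧸ (RingHom.ker f ⊓ RingHom.ker g) →+* BiAmalg f g J J' :=
    Ideal.Quotient.lift _ (BiAmalg.incl f g J J') hker
  letI : Algebra (A ⧸ (RingHom.ker f ⊓ RingHom.ker g)) (BiAmalg f g J J') := φ.toAlgebra
  haveI : IsScalarTower A (A ⧸ (RingHom.ker f ⊓ RingHom.ker g)) (BiAmalg f g J J') :=
    IsScalarTower.of_algebraMap_eq (fun a => (Ideal.Quotient.lift_mk _ _ _).symm)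
  haveI : Algebra.IsIntegral (A ⧸ (RingHom.ker f ⊓ RingHom.ker g)) (BiAmalg f g J J') :=
    Algebra.IsIntegral.tower_top A
  have hinj : Function.Injective φ := by
    rw [RingHom.injective_iff_ker_eq_bot, eq_bot_iff]
    rintro x hx
    obtain ⟨a, rfl⟩ := Ideal.Quotient.mk_surjective x
    rw [RingHom.mem_ker, Ideal.Quotient.lift_mk] at hx
    have h0 : ((f a, g a) : B × C) = 0 := congrArg Subtype.val hx
    rw [Prod.ext_iff] at h0
    rw [Ideal.mem_bot, Ideal.Quotient.eq_zero_iff_mem]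
    exact ⟨h0.1, h0.2⟩
  exact ringKrullDim_eq_of_isIntegral_of_injective hinj
end

section
/- Let (A, m) be a Noetherian local ring and M a finitely generated A-module. Then the Krull dimension of the idealization A ⋉ M equals the Krull dimension of A, and depth A ⋉ M = min(depth A, depth M). -/
open IsLocalRing

noncomputable def lcDepth (R M : Type) [CommRing R] [IsLocalRing R]
    [AddCommGroup M] [Module R M] : ℕ∞ :=
  sInf {n : ℕ∞ | ∃ i : ℕ, n = (i : ℕ∞) ∧
    Nontrivial ((localCohomology (maximalIdeal R) i).obj (ModuleCat.of R M))}

section Aux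

open CategoryTheory CategoryTheory.Limits Opposite

noncomputable section

namespace LCAux

universe u v

lemma linearYoneda_map_add (R : Type u) [Ring R] (C : Type*) [Category C] [Preadditive C]
    [Linear R C] {X Y : C} (f g : X ⟶ Y) :
    (linearYoneda R C).map (f + g)
      = (linearYoneda R C).map f + (linearYoneda R C).map g := by
  ext Z φ
  show φ ≫ (f + g) = φ ≫ f + φ ≫ g
  exact Preadditive.comp_add _ _ _ _ _ _

lemma rightOp_add {C D : Type*} [Category C] [Category D] [Preadditive D]
    {F G : Cᵒᵖ ⥤ D} (α β : F ⟶ G) :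
    NatTrans.rightOp (α + β) = NatTrans.rightOp α + NatTrans.rightOp β := by
  ext X
  simp [NatTrans.rightOp, op_add]

lemma leftOp_add {C D : Type*} [Category C] [Category D] [Preadditive D]
    {F G : C ⥤ Dᵒᵖ} (α β : F ⟶ G) :
    NatTrans.leftOp (α + β) = NatTrans.leftOp α + NatTrans.leftOp β := by
  ext X
  simp [NatTrans.leftOp, unop_add]

lemma mapHomologicalComplex_add {ι : Type*} {V W : Type*} [Category V] [Preadditive V]
    [Category W] [Preadditive W] [HasZeroObject W] {F G : V ⥤ W} [F.Additive] [G.Additive]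
    (α β : F ⟶ G) (c : ComplexShape ι) :
    NatTrans.mapHomologicalComplex (α + β) c
      = NatTrans.mapHomologicalComplex α c + NatTrans.mapHomologicalComplex β c := by
  ext
  simp
  rfl

lemma mapHomotopyCategory_add {ι : Type*} {V W : Type*} [Category V] [Preadditive V]
    [Category W] [Preadditive W] [HasZeroObject W] {F G : V ⥤ W} [F.Additive] [G.Additive]
    (α β : F ⟶ G) (c : ComplexShape ι) :
    NatTrans.mapHomotopyCategory (α + β) c
      = NatTrans.mapHomotopyCategory α c + NatTrans.mapHomotopyCategory β c := by
  ext X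
  simp [NatTrans.mapHomotopyCategory, mapHomologicalComplex_add]
  rfl

lemma leftDerived_add {C D : Type*} [Category C] [Category D] [Abelian C] [Abelian D]
    [HasProjectiveResolutions C] {F G : C ⥤ D} [F.Additive] [G.Additive]
    (α β : F ⟶ G) (n : ℕ) :
    NatTrans.leftDerived (α + β) n = NatTrans.leftDerived α n + NatTrans.leftDerived β n := by
  ext X
  simp [NatTrans.leftDerived, NatTrans.leftDerivedToHomotopyCategory, mapHomotopyCategory_add]
  exact (HomotopyCategory.homologyFunctor D (ComplexShape.down ℕ) n).map_add

instance extObjAdditive (R : Type u) [Ring R] (C : Type*) [Category C] [Abelian C]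
    [Linear R C] [EnoughProjectives C] (n : ℕ) (X : Cᵒᵖ) :
    ((Ext R C n).obj X).Additive where
  map_add {Y Y' f g} := by
    show (NatTrans.leftOp (NatTrans.leftDerived
        (NatTrans.rightOp ((linearYoneda R C).map (f + g))) n)).app X = _
    rw [linearYoneda_map_add, rightOp_add, leftDerived_add, leftOp_add]
    rfl

instance flipAdditive {J C D : Type*} [Category J] [Category C] [Category D]
    [Preadditive C] [Preadditive D] (F : J ⥤ C ⥤ D) [∀ j, (F.obj j).Additive] :
    F.flip.Additive where
  map_add {X Y f g} := by
    ext j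
    simp

instance localCohomologyAdditive {R : Type} [CommRing R] (J : Ideal R) (i : ℕ) :
    (localCohomology J i).Additive := by
  haveI : ∀ d, ((localCohomology.diagram (localCohomology.idealPowersDiagram J) i).obj d).Additive :=
    fun d => (inferInstance : ((Ext R (ModuleCat R) i).obj _).Additive)
  exact Functor.additive_of_iso
    (colimitIsoFlipCompColim (localCohomology.diagram (localCohomology.idealPowersDiagram J) i)).symm

lemma nontrivial_of_iso {R : Type} [CommRing R] {X Y : ModuleCat R} (e : X ≅ Y)
    [Nontrivial X] : Nontrivial Y :=
  e.toLinearEquiv.toEquiv.symm.nontrivial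

lemma nontrivial_biprod_iff {R : Type} [CommRing R] (X Y : ModuleCat R) :
    Nontrivial (X ⊞ Y : ModuleCat R) ↔ Nontrivial X ∨ Nontrivial Y := by
  have e := (ModuleCat.biprodIsoProd X Y).toLinearEquiv
  constructor
  · intro h
    have h2 : Nontrivial (↑X × ↑Y) := e.symm.toEquiv.nontrivial
    obtain ⟨⟨a, b⟩, ⟨c, d⟩, hne⟩ := h2
    by_cases hac : a = c
    · refine Or.inr ⟨b, d, fun hbd => hne ?_⟩
      rw [hac, hbd]
    · exact Or.inl ⟨a, c, hac⟩
  · intro h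
    have h2 : Nontrivial (↑X × ↑Y) := by
      cases h with
      | inl h => exact nontrivial_prod_left
      | inr h => exact nontrivial_prod_right
    haveI : Nontrivial ↑(ModuleCat.of R (↑X × ↑Y)) := h2
    exact e.toEquiv.nontrivial

end LCAux

end

end Aux

/-- For a Noetherian local ring `(A, 𝔪)` and a finitely generated `A`-module
`M`, the idealization `A ⋉ M` (trivial square-zero extension) satisfies
`dim (A ⋉ M) = dim A` and `depth (A ⋉ M) = min (depth A) (depth M)`. -/
theorem trivSqZeroExt_ringKrullDim_and_lcDepth (A M : Type) [CommRing A]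
    [IsNoetherianRing A] [IsLocalRing A] [AddCommGroup M] [Module A M]
    [Module.Finite A M] :
    letI : Module Aᵐᵒᵖ M := Module.compHom M ((RingHom.id A).fromOpposite mul_comm)
    haveI : IsCentralScalar A M := ⟨fun _ _ => rfl⟩
    ringKrullDim (TrivSqZeroExt A M) = ringKrullDim A ∧
    lcDepth A (TrivSqZeroExt A M) = min (lcDepth A A) (lcDepth A M) := by
  letI : Module Aᵐᵒᵖ M := Module.compHom M ((RingHom.id A).fromOpposite mul_comm)
  haveI : IsCentralScalar A M := ⟨fun _ _ => rfl⟩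
  refine ⟨?_, ?_⟩
  · -- Krull dimension
    refine le_antisymm ?_ (ringKrullDim_le_of_surjective
      (TrivSqZeroExt.fstHom A A M).toRingHom (fun a => ⟨TrivSqZeroExt.inl a, rfl⟩))
    have hmem : ∀ (p : PrimeSpectrum (TrivSqZeroExt A M)) (m : M),
        TrivSqZeroExt.inr m ∈ p.asIdeal := by
      intro p m
      refine p.2.mem_of_pow_mem 2 ?_
      have h2 : (TrivSqZeroExt.inr m : TrivSqZeroExt A M) ^ 2 = 0 := by
        rw [sq, TrivSqZeroExt.inr_mul_inr]
      rw [h2]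
      exact Ideal.zero_mem _
    have hiff : ∀ (p : PrimeSpectrum (TrivSqZeroExt A M)) (x : TrivSqZeroExt A M),
        x ∈ p.asIdeal ↔ x.fst ∈ p.asIdeal.comap (TrivSqZeroExt.inlHom A M) := by
      intro p x
      rw [Ideal.mem_comap, TrivSqZeroExt.inlHom_apply]
      constructor
      · intro h
        have := p.asIdeal.sub_mem h (hmem p x.snd)
        have hx : TrivSqZeroExt.inl x.fst = x - TrivSqZeroExt.inr x.snd := by
          rw [eq_sub_iff_add_eq, TrivSqZeroExt.inl_fst_add_inr_snd_eq]
        rwa [← hx] at this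
      · intro h
        rw [← TrivSqZeroExt.inl_fst_add_inr_snd_eq x]
        exact Ideal.add_mem _ h (hmem p x.snd)
    have := Order.krullDim_le_of_strictMono
      (fun p : PrimeSpectrum (TrivSqZeroExt A M) =>
        (⟨p.asIdeal.comap (TrivSqZeroExt.inlHom A M), p.2.comap _⟩ : PrimeSpectrum A))
      (Monotone.strictMono_of_injective
        (fun p q hpq => Ideal.comap_mono hpq)
        (by
          intro p q h
          ext x
          rw [hiff p x, hiff q x]
          simp only [PrimeSpectrum.mk.injEq] at h
          rw [h]))
    exact this
  · -- depth
    let e : TrivSqZeroExt A M ≃ₗ[A] (A × M) :=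
      { Equiv.refl (A × M) with
        map_add' := fun _ _ => rfl
        map_smul' := fun _ _ => rfl }
    have key : ∀ i : ℕ,
        Nontrivial ((localCohomology (maximalIdeal A) i).obj
          (ModuleCat.of A (TrivSqZeroExt A M))) ↔
        (Nontrivial ((localCohomology (maximalIdeal A) i).obj (ModuleCat.of A A)) ∨
         Nontrivial ((localCohomology (maximalIdeal A) i).obj (ModuleCat.of A M))) := by
      intro i
      haveI := LCAux.localCohomologyAdditive (maximalIdeal A) i
      haveI := CategoryTheory.Limits.preservesBinaryBiproducts_of_preservesBiproducts
        (localCohomology (maximalIdeal A) i)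
      let e1 : ModuleCat.of A (TrivSqZeroExt A M) ≅
          (ModuleCat.of A A ⊞ ModuleCat.of A M : ModuleCat A) :=
        e.toModuleIso ≪≫ (ModuleCat.biprodIsoProd (ModuleCat.of A A) (ModuleCat.of A M)).symm
      let e2 := (localCohomology (maximalIdeal A) i).mapIso e1 ≪≫
        CategoryTheory.Functor.mapBiprod (localCohomology (maximalIdeal A) i) (ModuleCat.of A A)
          (ModuleCat.of A M)
      rw [← LCAux.nontrivial_biprod_iff]
      exact ⟨fun h => @LCAux.nontrivial_of_iso A _ _ _ e2 h,
        fun h => @LCAux.nontrivial_of_iso A _ _ _ e2.symm h⟩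
    show sInf _ = min (sInf _) (sInf _)
    rw [← sInf_union]
    congr 1
    ext n
    simp only [Set.mem_setOf_eq, Set.mem_union]
    constructor
    · rintro ⟨i, rfl, h⟩
      rcases (key i).mp h with h' | h'
      · exact Or.inl ⟨i, rfl, h'⟩
      · exact Or.inr ⟨i, rfl, h'⟩
    · rintro (⟨i, rfl, h⟩ | ⟨i, rfl, h⟩)
      · exact ⟨i, rfl, (key i).mpr (Or.inl h)⟩
      · exact ⟨i, rfl, (key i).mpr (Or.inr h)⟩
end

section
/- If the annihilator of J' in the ring g(A) + J' is zero, then there is an isomorphism of (f(A)+J)-modules Hom_{A ⋈^{f,g}(J,J')}(f(A)+J, A ⋈^{f,g}(J,J')) ≅ J × 0, where f(A)+J is regarded as an A ⋈^{f,g}(J,J')-module via the surjection A ⋈^{f,g}(J,J') → f(A)+J, (b,c) ↦ b, whose kernel is 0 × J', and J × 0 is the ideal {(j,0) : j ∈ J} of A ⋈^{f,g}(J,J'). -/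
open IsLocalRing

variable {A B C : Type} [CommRing A] [CommRing B] [CommRing C]

/-- The subring `f(A) + J` of `B`. -/
def ImageAddIdeal (f : A →+* B) (J : Ideal B) : Subring B where
  carrier := {x | ∃ a : A, ∃ j ∈ J, x = f a + j}
  zero_mem' := ⟨0, 0, J.zero_mem, by simp⟩
  one_mem' := ⟨1, 0, J.zero_mem, by simp⟩
  add_mem' := by
    rintro x y ⟨a, j, hj, rfl⟩ ⟨b, k, hk, rfl⟩
    exact ⟨a + b, j + k, J.add_mem hj hk, by rw [map_add]; ring⟩
  neg_mem' := by
    rintro x ⟨a, j, hj, rfl⟩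
    exact ⟨-a, -j, J.neg_mem hj, by rw [map_neg]; ring⟩
  mul_mem' := by
    rintro x y ⟨a, j, hj, rfl⟩ ⟨b, k, hk, rfl⟩
    exact ⟨a * b, f a * k + j * f b + j * k,
      J.add_mem (J.add_mem (J.mul_mem_left _ hk) (J.mul_mem_right _ hj)) (J.mul_mem_right _ hj),
      by rw [map_mul]; ring⟩

/-- The projection `A ⋈^{f,g} (J, J') → f(A) + J` onto the first coordinate; it is a
surjective ring homomorphism with kernel `0 × J'`. -/
def BiAmalg.projFJ (f : A →+* B) (g : A →+* C) (J : Ideal B) (J' : Ideal C) :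
    BiAmalg f g J J' →+* ImageAddIdeal f J where
  toFun x := ⟨(x : B × C).1, by
    obtain ⟨a, j, hj, j', hj', hx⟩ := x.2
    exact ⟨a, j, hj, by rw [hx]⟩⟩
  map_one' := rfl
  map_mul' x y := rfl
  map_zero' := rfl
  map_add' x y := rfl

/-- The ideal `J × 0 = {(j, 0) : j ∈ J}` of `A ⋈^{f,g} (J, J')`. -/
def BiAmalg.idealJ0 (f : A →+* B) (g : A →+* C) (J : Ideal B) (J' : Ideal C) :
    Ideal (BiAmalg f g J J') where
  carrier := {x | ∃ j ∈ J, (x : B × C) = (j, 0)}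
  zero_mem' := ⟨0, J.zero_mem, by ext <;> simp⟩
  add_mem' := by
    rintro x y ⟨j, hj, hx⟩ ⟨k, hk, hy⟩
    refine ⟨j + k, J.add_mem hj hk, ?_⟩
    have : ((x + y : BiAmalg f g J J') : B × C) = (x : B × C) + (y : B × C) := rfl
    rw [this, hx, hy]
    simp
  smul_mem' := by
    rintro c x ⟨j, hj, hx⟩
    refine ⟨(c : B × C).1 * j, J.mul_mem_left _ hj, ?_⟩
    have : ((c • x : BiAmalg f g J J') : B × C) = (c : B × C) * (x : B × C) := rfl
    rw [this, hx]
    simp [Prod.ext_iff]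

section Aux

variable (f : A →+* B) (g : A →+* C) (J : Ideal B) (J' : Ideal C)

instance instModBA : Module (BiAmalg f g J J') (ImageAddIdeal f J) :=
  Module.compHom _ (BiAmalg.projFJ f g J J')

theorem smul_coe_BA (r : BiAmalg f g J J') (m : ImageAddIdeal f J) :
    ((r • m : ImageAddIdeal f J) : B) = ((r : B × C)).1 * (m : B) := rfl

/-- Multiplication by an element of `J × 0` as a linear map `f(A)+J → R`. -/
def BiAmalg.toHom (x : BiAmalg.idealJ0 f g J J') :
    ImageAddIdeal f J →ₗ[BiAmalg f g J J'] BiAmalg f g J J' where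
  toFun m := ⟨((m : B) * ((x : BiAmalg f g J J') : B × C).1, 0), by
    obtain ⟨j, hj, hx⟩ := x.2
    refine ⟨0, (m : B) * ((x : BiAmalg f g J J') : B × C).1, ?_, 0, J'.zero_mem, by simp⟩
    rw [hx]
    exact J.mul_mem_left _ hj⟩
  map_add' m n := Subtype.ext <| by
    show (_, _) = (_, _) + (_, _)
    simp [Prod.ext_iff, add_mul]
  map_smul' r m := Subtype.ext <| by
    show (_, _) = ((r : B × C) * (_, _) : B × C)
    rw [smul_coe_BA]
    simp [Prod.ext_iff, mul_assoc]

theorem BiAmalg.toHom_apply (x : BiAmalg.idealJ0 f g J J') (m : ImageAddIdeal f J) :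
    ((BiAmalg.toHom f g J J' x m : BiAmalg f g J J') : B × C)
      = ((m : B) * ((x : BiAmalg f g J J') : B × C).1, 0) := rfl

theorem BiAmalg.apply_one_mem (hI : J.comap f = J'.comap g)
    (hann : ∀ (a : A) (j' : C), j' ∈ J' → (∀ y ∈ J', (g a + j') * y = 0) → g a + j' = 0)
    (φ : ImageAddIdeal f J →ₗ[BiAmalg f g J J'] BiAmalg f g J J') :
    φ 1 ∈ BiAmalg.idealJ0 f g J J' := by
  obtain ⟨a, j, hj, j', hj', hx⟩ := (φ 1).2
  have h2 : ∀ y ∈ J', (g a + j') * y = 0 := by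
    intro y hy
    set r : BiAmalg f g J J' := ⟨(0, y), 0, 0, J.zero_mem, y, hy, by simp⟩ with hr
    have hr1 : r • (1 : ImageAddIdeal f J) = 0 := by
      apply Subtype.ext
      rw [smul_coe_BA]
      show (0 : B) * _ = 0
      simp
    have := φ.map_smul r 1
    rw [hr1, map_zero] at this
    have h0 : ((r • φ 1 : BiAmalg f g J J') : B × C) = 0 := by rw [← this]; rfl
    have : ((r : B × C) * ((φ 1 : BiAmalg f g J J') : B × C)) = 0 := h0
    have h2 := congrArg Prod.snd this
    simp only [Prod.snd_mul] at h2
    rw [hx] at h2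
    have hry : (r : B × C).2 = y := rfl
    simpa [mul_comm, hry] using h2
  have hz : g a + j' = 0 := hann a j' hj' h2
  have hga : g a ∈ J' := by
    have : g a = -j' := by linear_combination hz
    rw [this]; exact J'.neg_mem hj'
  have hfa : f a ∈ J := by
    have : a ∈ J'.comap g := hga
    rw [← hI] at this
    exact this
  exact ⟨f a + j, J.add_mem hfa hj, by rw [hx, hz]⟩

theorem BiAmalg.apply_eq
    (φ : ImageAddIdeal f J →ₗ[BiAmalg f g J J'] BiAmalg f g J J')
    (h0 : ((φ 1 : BiAmalg f g J J') : B × C).2 = 0) (m : ImageAddIdeal f J) :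
    ((φ m : BiAmalg f g J J') : B × C)
      = ((m : B) * ((φ 1 : BiAmalg f g J J') : B × C).1, 0) := by
  obtain ⟨a, j, hj, hm⟩ := m.2
  set r : BiAmalg f g J J' :=
    ⟨(f a + j, g a + 0), BiAmalg.mem_mk f g J J' a hj J'.zero_mem⟩ with hr
  have h1 : r • (1 : ImageAddIdeal f J) = m := by
    apply Subtype.ext
    rw [smul_coe_BA]
    show (f a + j) * 1 = (m : B)
    rw [mul_one, hm]
  have := φ.map_smul r 1
  rw [h1] at this
  rw [this]
  have : ((r • φ 1 : BiAmalg f g J J') : B × C)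
      = (r : B × C) * ((φ 1 : BiAmalg f g J J') : B × C) := rfl
  rw [this, hr]
  rw [Prod.ext_iff]
  constructor
  · simp [hm]
  · simp [h0]

end Aux

set_option synthInstance.maxHeartbeats 1000000 in
set_option maxHeartbeats 1000000 in
/-- If `Ann_{g(A)+J'}(J') = 0`, then
`Hom_{A ⋈^{f,g} (J,J')}(f(A)+J, A ⋈^{f,g} (J,J')) ≅ J × 0` as `(f(A)+J)`-modules.
Both sides are annihilated by `0 × J'`, so their `(f(A)+J)`-module structures are the
descents of their `A ⋈^{f,g} (J,J')`-module structures along the surjection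
`A ⋈^{f,g} (J,J') → f(A)+J`; hence the isomorphism is stated as an isomorphism of
`A ⋈^{f,g} (J,J')`-modules, which is equivalent. -/
theorem biAmalg_hom_iso (f : A →+* B) (g : A →+* C) (J : Ideal B) (J' : Ideal C)
    (hI : J.comap f = J'.comap g)
    (hann : ∀ (a : A) (j' : C), j' ∈ J' → (∀ y ∈ J', (g a + j') * y = 0) → g a + j' = 0) :
    letI : Module (BiAmalg f g J J') (ImageAddIdeal f J) :=
      Module.compHom _ (BiAmalg.projFJ f g J J')
    Nonempty ((ImageAddIdeal f J →ₗ[BiAmalg f g J J'] BiAmalg f g J J')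
      ≃ₗ[BiAmalg f g J J'] BiAmalg.idealJ0 f g J J') := by
  refine ⟨LinearEquiv.ofLinear ?_ ?_ ?_ ?_⟩
  · exact
      { toFun := fun φ => ⟨φ 1, BiAmalg.apply_one_mem f g J J' hI hann φ⟩
        map_add' := fun φ ψ => Subtype.ext (by simp)
        map_smul' := fun r φ => Subtype.ext (by simp) }
  · exact
      { toFun := fun x => BiAmalg.toHom f g J J' x
        map_add' := fun x y => by
          apply LinearMap.ext
          intro m
          apply Subtype.ext
          show ((_ : B × C)) = ((_ : BiAmalg f g J J') : B × C) + _
          simp only [BiAmalg.toHom_apply]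
          have : (((x + y : BiAmalg.idealJ0 f g J J') : BiAmalg f g J J') : B × C)
              = ((x : BiAmalg f g J J') : B × C) + ((y : BiAmalg f g J J') : B × C) := rfl
          rw [this]
          simp [Prod.ext_iff, mul_add]
        map_smul' := fun r x => by
          apply LinearMap.ext
          intro m
          apply Subtype.ext
          show ((_ : B × C)) = ((r : B × C) * _ : B × C)
          simp only [BiAmalg.toHom_apply]
          have : (((r • x : BiAmalg.idealJ0 f g J J') : BiAmalg f g J J') : B × C)
              = (r : B × C) * ((x : BiAmalg f g J J') : B × C) := rfl
          rw [this]
          simp [Prod.ext_iff, mul_assoc, mul_left_comm] }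
  · apply LinearMap.ext
    intro x
    apply Subtype.ext
    apply Subtype.ext
    obtain ⟨j, hj, hx⟩ := x.2
    simp only [LinearMap.coe_comp, Function.comp_apply, LinearMap.coe_mk, AddHom.coe_mk,
      LinearMap.id_coe, id_eq]
    rw [BiAmalg.toHom_apply, hx]
    simp
  · apply LinearMap.ext
    intro φ
    apply LinearMap.ext
    intro m
    apply Subtype.ext
    have h0 : ((φ 1 : BiAmalg f g J J') : B × C).2 = 0 := by
      obtain ⟨j, hj, hx⟩ := BiAmalg.apply_one_mem f g J J' hI hann φ
      rw [hx]
    simp only [LinearMap.coe_comp, Function.comp_apply, LinearMap.coe_mk, AddHom.coe_mk,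
      LinearMap.id_coe, id_eq]
    rw [BiAmalg.toHom_apply]
    exact (BiAmalg.apply_eq f g J J' φ h0 m).symm
end
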